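/- Let H be a real Hilbert space and A : D(A) ⊂ H → H a self-adjoint operator whose spectrum consists of a simple negative eigenvalue μ₀ < 0 with normalized eigenfunction ξ₀, the simple eigenvalue 0 with kernel spanned by a vector k, and the rest of the spectrum contained in [σ, ∞) for some σ > 0. Let Ψ ∈ D(A) with ⟨AΨ, Ψ⟩ < 0, and set τ = AΨ. Then there exists a constant κ > 0 such that for all ξ ∈ D(A) with ⟨ξ, k⟩ = 0 and ⟨ξ, τ⟩ = 0, one has ⟨Aξ, ξ⟩ ≥ κ‖ξ‖². -/

import Mathlib

open scoped RealInnerProductSpace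

/-- Abstract coercivity of a self-adjoint operator with one simple negative
eigenvalue, one-dimensional kernel, and positive remaining spectrum, on the
subspace orthogonal to the kernel and to `τ = AΨ` for a negative direction `Ψ`. -/
theorem stmt10 {H : Type*} [NormedAddCommGroup H] [InnerProductSpace ℝ H]
    [CompleteSpace H]
    (A : H →ₗ[ℝ] H) (hsym : ∀ x y, ⟪A x, y⟫ = ⟪x, A y⟫)
    (μ₀ : ℝ) (hμ₀ : μ₀ < 0) (ξ₀ : H) (hξ₀norm : ‖ξ₀‖ = 1) (hAξ₀ : A ξ₀ = μ₀ • ξ₀)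
    (k : H) (hk : k ≠ 0) (hAk : A k = 0)
    (hker : ∀ x, A x = 0 → ∃ a : ℝ, x = a • k)
    (σ : ℝ) (hσ : 0 < σ)
    (hpos : ∀ g, ⟪g, ξ₀⟫ = 0 → ⟪g, k⟫ = 0 → σ * ‖g‖ ^ 2 ≤ ⟪A g, g⟫)
    (Ψ : H) (hΨ : ⟪A Ψ, Ψ⟫ < 0) (τ : H) (hτ : τ = A Ψ) :
    ∃ κ : ℝ, 0 < κ ∧ ∀ ξ : H, ⟪ξ, k⟫ = 0 → ⟪ξ, τ⟫ = 0 →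
      κ * ‖ξ‖ ^ 2 ≤ ⟪A ξ, ξ⟫ := by
  have hμ₀ne : μ₀ ≠ 0 := ne_of_lt hμ₀
  have hξ₀self : ⟪ξ₀, ξ₀⟫ = (1:ℝ) := by
    rw [real_inner_self_eq_norm_sq, hξ₀norm]; norm_num
  -- ξ₀ ⊥ k
  have hξ₀k : ⟪ξ₀, k⟫ = 0 := by
    have h1 := hsym ξ₀ k
    rw [hAξ₀, hAk, inner_zero_right, real_inner_smul_left] at h1
    exact (mul_eq_zero.mp h1).resolve_left hμ₀ne
  have hknorm : (0:ℝ) < ‖k‖ ^ 2 := pow_pos (norm_pos_iff.mpr hk) 2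
  obtain ⟨c, hc⟩ : ∃ c : ℝ, c = ⟪Ψ, ξ₀⟫ := ⟨_, rfl⟩
  obtain ⟨d, hd⟩ : ∃ d : ℝ, d = ⟪Ψ, k⟫ / ‖k‖ ^ 2 := ⟨_, rfl⟩
  obtain ⟨p, hp⟩ : ∃ p : H, p = Ψ - c • ξ₀ - d • k := ⟨_, rfl⟩
  have hΨeq : Ψ = p + c • ξ₀ + d • k := by rw [hp]; abel
  have hpξ₀ : ⟪p, ξ₀⟫ = 0 := by
    rw [hp, inner_sub_left, inner_sub_left, real_inner_smul_left, real_inner_smul_left,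
      hξ₀self, real_inner_comm ξ₀ k, hξ₀k, ← hc]
    ring
  have hpk : ⟪p, k⟫ = 0 := by
    rw [hp, inner_sub_left, inner_sub_left, real_inner_smul_left, real_inner_smul_left,
      hξ₀k, real_inner_self_eq_norm_sq, hd]
    field_simp
    ring
  obtain ⟨β, hβdef⟩ : ∃ β : ℝ, β = ⟪A p, p⟫ := ⟨_, rfl⟩
  have hβ : 0 ≤ β := by rw [hβdef]; exact le_trans (by positivity) (hpos p hpξ₀ hpk)
  have hAp : A p = A Ψ - (c * μ₀) • ξ₀ := by
    rw [hp, map_sub, map_sub, map_smul, map_smul, hAξ₀, hAk, smul_smul, smul_zero, sub_zero]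
  have hAΨeq : A Ψ = A p + (c * μ₀) • ξ₀ := by rw [hAp]; abel
  -- ⟪A Ψ, Ψ⟫ = μ₀ c² + β
  have hAΨξ₀ : ⟪A Ψ, ξ₀⟫ = μ₀ * c := by
    rw [hsym, hAξ₀, real_inner_smul_right, ← hc]
  have hAΨk : ⟪A Ψ, k⟫ = 0 := by rw [hsym, hAk, inner_zero_right]
  have hAΨp : ⟪A Ψ, p⟫ = β := by
    rw [hAΨeq, inner_add_left, real_inner_smul_left, real_inner_comm p ξ₀, hpξ₀, ← hβdef]
    ring
  have hsum : μ₀ * c ^ 2 + β = ⟪A Ψ, Ψ⟫ := by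
    nth_rewrite 2 [hΨeq]
    rw [inner_add_right, inner_add_right, real_inner_smul_right, real_inner_smul_right,
      hAΨξ₀, hAΨk, hAΨp]
    ring
  have hneg : μ₀ * c ^ 2 + β < 0 := by rw [hsum]; exact hΨ
  have hc2pos : 0 < c ^ 2 := by nlinarith
  -- the coercivity constant
  obtain ⟨N, hN⟩ : ∃ N : ℝ, N = σ * (μ₀ * (μ₀ * c ^ 2 + β)) := ⟨_, rfl⟩
  obtain ⟨D, hD⟩ : ∃ D : ℝ, D = σ * β + μ₀ ^ 2 * c ^ 2 := ⟨_, rfl⟩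
  have hDpos : 0 < D := by
    have h1 : 0 < μ₀ ^ 2 * c ^ 2 := by positivity
    rw [hD]; nlinarith
  have hNpos : 0 < N := by
    rw [hN]; exact mul_pos hσ (mul_pos_of_neg_of_neg hμ₀ hneg)
  refine ⟨N / D, div_pos hNpos hDpos, ?_⟩
  intro ξ hξk hξτ
  obtain ⟨a, ha⟩ : ∃ a : ℝ, a = ⟪ξ, ξ₀⟫ := ⟨_, rfl⟩
  obtain ⟨g, hg⟩ : ∃ g : H, g = ξ - a • ξ₀ := ⟨_, rfl⟩
  have hξeq : ξ = a • ξ₀ + g := by rw [hg]; abel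
  have hgξ₀ : ⟪g, ξ₀⟫ = 0 := by
    rw [hg, inner_sub_left, real_inner_smul_left, hξ₀self, ← ha]; ring
  have hgk : ⟪g, k⟫ = 0 := by
    rw [hg, inner_sub_left, real_inner_smul_left, hξ₀k, hξk]; ring
  obtain ⟨γ, hγdef⟩ : ∃ γ : ℝ, γ = ⟪A g, g⟫ := ⟨_, rfl⟩
  have hγ : σ * ‖g‖ ^ 2 ≤ γ := by rw [hγdef]; exact hpos g hgξ₀ hgk
  have hγ0 : 0 ≤ γ := le_trans (by positivity) hγ
  have hAgξ₀ : ⟪A g, ξ₀⟫ = 0 := by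
    rw [hsym, hAξ₀, real_inner_smul_right, hgξ₀, mul_zero]
  have hAgk : ⟪A g, k⟫ = 0 := by rw [hsym, hAk, inner_zero_right]
  have hAξ : A ξ = (a * μ₀) • ξ₀ + A g := by
    rw [hξeq, map_add, map_smul, hAξ₀, smul_smul]
  -- quadratic form value
  have hquad : ⟪A ξ, ξ⟫ = μ₀ * a ^ 2 + γ := by
    rw [hAξ]
    rw [hξeq]
    rw [inner_add_left, inner_add_right, inner_add_right, real_inner_smul_left,
      real_inner_smul_left, real_inner_smul_right, real_inner_smul_right, hξ₀self,
      real_inner_comm g ξ₀, hgξ₀, hAgξ₀, ← hγdef]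
    ring
  -- the constraint
  obtain ⟨e, hedef⟩ : ∃ e : ℝ, e = ⟪A g, p⟫ := ⟨_, rfl⟩
  have he : e = -(a * μ₀ * c) := by
    have h0 : ⟪A ξ, Ψ⟫ = 0 := by rw [hsym, ← hτ, hξτ]
    have h1 : ⟪A ξ, Ψ⟫ = a * μ₀ * c + e := by
      rw [hAξ, hΨeq, inner_add_left, inner_add_right, inner_add_right, inner_add_right,
        inner_add_right, real_inner_smul_left, real_inner_smul_left, real_inner_smul_left,
        real_inner_smul_right, real_inner_smul_right, real_inner_smul_right,
        real_inner_smul_right, hξ₀self, real_inner_comm p ξ₀, hpξ₀, hξ₀k,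
        hAgξ₀, hAgk, ← hedef]
      ring
    rw [h0] at h1
    linarith
  -- Cauchy–Schwarz for the positive part of the form
  have hkey : ∀ t : ℝ, 0 ≤ β * (t * t) + 2 * e * t + γ := by
    intro t
    have h1 : ⟪g + t • p, ξ₀⟫ = 0 := by
      rw [inner_add_left, real_inner_smul_left, hgξ₀, hpξ₀]; ring
    have h2 : ⟪g + t • p, k⟫ = 0 := by
      rw [inner_add_left, real_inner_smul_left, hgk, hpk]; ring
    have h3 := le_trans (by positivity) (hpos _ h1 h2)
    have h4 : ⟪A (g + t • p), g + t • p⟫ = β * (t * t) + 2 * e * t + γ := by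
      rw [map_add, map_smul, inner_add_left, inner_add_right, inner_add_right,
        real_inner_smul_left, real_inner_smul_left, real_inner_smul_right,
        real_inner_smul_right, ← hβdef, ← hγdef, ← hedef]
      have h5 : ⟪A p, g⟫ = e := by rw [hsym, real_inner_comm, ← hedef]
      rw [h5]
      ring
    rw [h4] at h3
    exact h3
  have hdisc : discrim β (2 * e) γ ≤ 0 := discrim_le_zero hkey
  rw [discrim] at hdisc
  have he2 : e ^ 2 ≤ β * γ := by
    have h6 : (2 * e) ^ 2 = 4 * e ^ 2 := by ring
    linarith [hdisc]
  have hcs : a ^ 2 * μ₀ ^ 2 * c ^ 2 ≤ γ * β := by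
    have : a ^ 2 * μ₀ ^ 2 * c ^ 2 = e ^ 2 := by rw [he]; ring
    rw [this, mul_comm γ β]; exact he2
  -- norm splitting
  have hnorm : ‖ξ‖ ^ 2 = a ^ 2 + ‖g‖ ^ 2 := by
    rw [hξeq, norm_add_sq_real, real_inner_smul_left, real_inner_comm g ξ₀, hgξ₀,
      norm_smul, hξ₀norm, mul_one, Real.norm_eq_abs, sq_abs]
    ring
  rw [hquad, hnorm, div_mul_eq_mul_div, div_le_iff₀ hDpos]
  have fact1 : 0 ≤ (σ - μ₀) * (γ * β - a ^ 2 * μ₀ ^ 2 * c ^ 2) :=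
    mul_nonneg (by linarith) (by linarith)
  have fact2 : 0 ≤ μ₀ * (μ₀ * c ^ 2 + β) * (γ - σ * ‖g‖ ^ 2) :=
    mul_nonneg (le_of_lt (mul_pos_of_neg_of_neg hμ₀ hneg)) (by linarith)
  rw [hN, hD]
  have key : (μ₀ * a ^ 2 + γ) * (σ * β + μ₀ ^ 2 * c ^ 2) -
      σ * (μ₀ * (μ₀ * c ^ 2 + β)) * (a ^ 2 + ‖g‖ ^ 2) =
      (σ - μ₀) * (γ * β - a ^ 2 * μ₀ ^ 2 * c ^ 2) +
      μ₀ * (μ₀ * c ^ 2 + β) * (γ - σ * ‖g‖ ^ 2) := by ring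
  linarith [fact1, fact2, key]
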